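/- Let k be a field of characteristic 2, G a finite group, and ε₁, ε₂ : G → ℤ/2ℤ essential characters. For a unitary element x = Σ_{g∈G} x_g·g of k[G] and (i, j) ∈ ℤ/2ℤ × ℤ/2ℤ, set S_{ij}(x) = Σ_{g : ε₁(g)=i, ε₂(g)=j} x_g. Then exactly one of the four elements S_{00}(x), S_{10}(x), S_{01}(x), S_{11}(x) equals 1 and the other three equal 0. -/

import Mathlib

/-- The canonical involution `x ↦ x*` of the group algebra `k[G]`, determined by
`g* = g⁻¹` for `g ∈ G`. -/
noncomputable def gStar {k G : Type*} [Semiring k] [Group G] (x : MonoidAlgebra k G) :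
    MonoidAlgebra k G := MonoidAlgebra.ofCoeff (Finsupp.equivMapDomain (Equiv.inv G) x.coeff)

section Aux

variable {k G : Type*} [Field k] [CharP k 2] [Group G] [Fintype G]

/-- Key cross relation. -/
lemma aux_cross (E : G → ZMod 2 × ZMod 2) (x : G → k)
    (hEhom : ∀ a b : G, E (a * b) = E a + E b)
    (hEss : ∀ g : G, g * g = 1 → E g = 0)
    (key : ∀ h : G, h ≠ 1 → (∑ a : G, x a * x (h * a)) = 0)
    (p q r s τ : ZMod 2 × ZMod 2) (hτ : τ ≠ 0)
    (hq : q = p + τ) (hs : s = r + τ)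
    (huniv : ({p, q, r, s} : Finset (ZMod 2 × ZMod 2)) = Finset.univ)
    (h1 : p ∉ ({q, r, s} : Finset (ZMod 2 × ZMod 2)))
    (h2 : q ∉ ({r, s} : Finset (ZMod 2 × ZMod 2)))
    (h3 : r ∉ ({s} : Finset (ZMod 2 × ZMod 2))) :
    (∑ g ∈ Finset.univ.filter fun g => E g = p, x g) *
        (∑ g ∈ Finset.univ.filter fun g => E g = q, x g) +
      (∑ g ∈ Finset.univ.filter fun g => E g = r, x g) *
        (∑ g ∈ Finset.univ.filter fun g => E g = s, x g) = 0 := by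
  have hE1 : E 1 = 0 := by
    have h := hEhom 1 1
    rw [one_mul] at h
    exact (left_eq_add.mp h)
  have hvv : ∀ v : ZMod 2 × ZMod 2, v + v = 0 := by decide
  have hvw : ∀ u w : ZMod 2 × ZMod 2, u + w + u = w := by decide
  have hEinv : ∀ g : G, E g⁻¹ = E g := by
    intro g
    have h := hEhom g⁻¹ g
    rw [inv_mul_cancel, hE1] at h
    calc E g⁻¹ = E g⁻¹ + (E g + E g) := by rw [hvv, add_zero]
      _ = (E g⁻¹ + E g) + E g := by rw [add_assoc]
      _ = 0 + E g := by rw [← h]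
      _ = E g := zero_add _
  have hAshift : ∀ (v : ZMod 2 × ZMod 2) (h : G),
      (∑ a ∈ Finset.univ.filter fun a => E a = v, x a * x (h⁻¹ * a)) =
      (∑ a ∈ Finset.univ.filter fun a => E a = v + E h, x a * x (h * a)) := by
    intro v h
    refine Finset.sum_bij' (fun a _ => h⁻¹ * a) (fun b _ => h * b) ?_ ?_ ?_ ?_ ?_
    · intro a ha
      simp only [Finset.mem_filter, Finset.mem_univ, true_and] at ha ⊢
      rw [hEhom, hEinv, ha, add_comm]
    · intro b hb
      simp only [Finset.mem_filter, Finset.mem_univ, true_and] at hb ⊢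
      rw [hEhom, hb, ← add_assoc, hvw]
    · intro a _
      show h * (h⁻¹ * a) = a
      rw [mul_inv_cancel_left]
    · intro b _
      show h⁻¹ * (h * b) = b
      rw [inv_mul_cancel_left]
    · intro a _
      show x a * x (h⁻¹ * a) = x (h⁻¹ * a) * x (h * (h⁻¹ * a))
      rw [mul_inv_cancel_left]
      exact mul_comm (x a) (x (h⁻¹ * a))
  have hSprod : ∀ v w : ZMod 2 × ZMod 2, w = v + τ →
      (∑ g ∈ Finset.univ.filter fun g => E g = v, x g) *
        (∑ g ∈ Finset.univ.filter fun g => E g = w, x g) =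
      ∑ h ∈ Finset.univ.filter fun h => E h = τ,
        ∑ a ∈ Finset.univ.filter fun a => E a = v, x a * x (h * a) := by
    intro v w hw
    have hcomm : (∑ h ∈ Finset.univ.filter fun h => E h = τ,
          ∑ a ∈ Finset.univ.filter fun a => E a = v, x a * x (h * a)) =
        ∑ a ∈ Finset.univ.filter fun a => E a = v,
          ∑ h ∈ Finset.univ.filter fun h => E h = τ, x a * x (h * a) := Finset.sum_comm
    rw [Finset.sum_mul_sum, hcomm]
    refine Finset.sum_congr rfl fun a ha => ?_
    simp only [Finset.mem_filter, Finset.mem_univ, true_and] at ha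
    refine Finset.sum_bij' (fun b _ => b * a⁻¹) (fun h _ => h * a) ?_ ?_ ?_ ?_ ?_
    · intro b hb
      simp only [Finset.mem_filter, Finset.mem_univ, true_and] at hb ⊢
      rw [hEhom, hEinv, hb, ha, hw, hvw]
    · intro h hh
      simp only [Finset.mem_filter, Finset.mem_univ, true_and] at hh ⊢
      rw [hEhom, hh, ha, hw, add_comm]
    · intro b _
      show b * a⁻¹ * a = b
      rw [inv_mul_cancel_right]
    · intro h _
      show h * a * a⁻¹ = h
      rw [mul_inv_cancel_right]
    · intro b _
      show x a * x b = x a * x (b * a⁻¹ * a)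
      rw [inv_mul_cancel_right]
  subst hq hs
  rw [hSprod p (p + τ) rfl, hSprod r (r + τ) rfl, ← Finset.sum_add_distrib]
  refine Finset.sum_involution (fun h _ => h⁻¹) ?_ ?_ ?_ ?_
  · intro h hh
    have hEh : E h = τ := (Finset.mem_filter.mp hh).2
    have hne : h ≠ 1 := by
      intro h1'
      rw [h1', hE1] at hEh
      exact hτ hEh.symm
    have h0 : ∑ v : ZMod 2 × ZMod 2,
        (∑ a ∈ Finset.univ.filter fun a => E a = v, x a * x (h * a)) = 0 := by
      rw [Finset.sum_fiberwise Finset.univ E (fun a => x a * x (h * a))]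
      exact key h hne
    rw [← huniv, Finset.sum_insert h1, Finset.sum_insert h2, Finset.sum_insert h3,
      Finset.sum_singleton] at h0
    rw [hAshift p h, hAshift r h, hEh]
    linear_combination h0
  · intro h hh _ heq
    apply hτ
    have heq' : h⁻¹ = h := heq
    have hsq : h * h = 1 := by
      nth_rewrite 1 [← heq']
      rw [inv_mul_cancel]
    rw [← (Finset.mem_filter.mp hh).2]
    exact hEss h hsq
  · intro h hh
    simp only [Finset.mem_filter, Finset.mem_univ, true_and] at hh ⊢
    rw [hEinv]
    exact hh
  · intro h _
    exact inv_inv h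

lemma aux_final (a b c d : k)
    (hsum : a + b + c + d = 1) (R1 : a * d + b * c = 0) (R2 : a * b + c * d = 0)
    (R3 : a * c + b * d = 0) :
    (a = 1 ∧ b = 0 ∧ c = 0 ∧ d = 0) ∨ (b = 1 ∧ a = 0 ∧ c = 0 ∧ d = 0) ∨
      (c = 1 ∧ a = 0 ∧ b = 0 ∧ d = 0) ∨ (d = 1 ∧ a = 0 ∧ b = 0 ∧ c = 0) := by
  have c2 : (2 : k) = 0 := by
    have := CharP.cast_eq_zero k 2
    simpa using this
  have h12 : (a + b) * (c + d) = 0 := by linear_combination R1 + R3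
  have h13 : (a + c) * (b + d) = 0 := by linear_combination R1 + R2
  have h14 : (a + d) * (b + c) = 0 := by linear_combination R2 + R3
  rcases mul_eq_zero.mp h12 with e1 | e1 <;> rcases mul_eq_zero.mp h13 with e2 | e2 <;>
    rcases mul_eq_zero.mp h14 with e3 | e3
  · -- a+b=0, a+c=0, a+d=0 : contradiction
    exact absurd (by linear_combination e1 + e2 + e3 - hsum - a * c2 : (1:k) = 0) one_ne_zero
  · -- a+b=0, a+c=0, b+c=0 : d = 1
    have hb : b = a := by linear_combination e1 - a * c2
    have hc : c = a := by linear_combination e2 - a * c2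
    have hd : d = a + 1 := by linear_combination hsum - e1 - e2
    rw [hb, hc, hd] at R1
    have ha : a = 0 := by linear_combination R1 - a ^ 2 * c2
    exact Or.inr (Or.inr (Or.inr ⟨by linear_combination hd + ha, ha,
      by linear_combination hb + ha, by linear_combination hc + ha⟩))
  · -- a+b=0, b+d=0, a+d=0 : c = 1
    have hb : b = a := by linear_combination e1 - a * c2
    have hd : d = a := by linear_combination e3 - a * c2
    have hc : c = a + 1 := by linear_combination hsum - e1 - e3
    rw [hb, hd, hc] at R3
    have ha : a = 0 := by linear_combination R3 - a ^ 2 * c2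
    exact Or.inr (Or.inr (Or.inl ⟨by linear_combination hc + ha, ha,
      by linear_combination hb + ha, by linear_combination hd + ha⟩))
  · -- a+b=0, b+d=0, b+c=0 : contradiction
    exact absurd (by linear_combination e1 + e2 + e3 - hsum - b * c2 : (1:k) = 0) one_ne_zero
  · -- c+d=0, a+c=0, a+d=0 : b = 1
    have hc : c = a := by linear_combination e2 - a * c2
    have hd : d = a := by linear_combination e3 - a * c2
    have hb : b = a + 1 := by linear_combination hsum - e2 - e3
    rw [hc, hd, hb] at R2
    have ha : a = 0 := by linear_combination R2 - a ^ 2 * c2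
    exact Or.inr (Or.inl ⟨by linear_combination hb + ha, ha,
      by linear_combination hc + ha, by linear_combination hd + ha⟩)
  · -- c+d=0, a+c=0, b+c=0 : contradiction
    exact absurd (by linear_combination e1 + e2 + e3 - hsum - c * c2 : (1:k) = 0) one_ne_zero
  · -- c+d=0, b+d=0, a+d=0 : contradiction
    exact absurd (by linear_combination e1 + e2 + e3 - hsum - d * c2 : (1:k) = 0) one_ne_zero
  · -- c+d=0, b+d=0, b+c=0 : a = 1
    have hc : c = b := by linear_combination e3 - b * c2
    have hd : d = b := by linear_combination e2 - b * c2
    have ha : a = b + 1 := by linear_combination hsum - e2 - e3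
    rw [hc, hd, ha] at R1
    have hb0 : b = 0 := by linear_combination R1 - b ^ 2 * c2
    exact Or.inl ⟨by linear_combination ha + hb0, hb0,
      by linear_combination hc + hb0, by linear_combination hd + hb0⟩

end Aux

/-- Let `k` be a field of characteristic 2, `G` a finite group, and `ε₁, ε₂ : G → ℤ/2ℤ`
essential characters. For a unitary `x ∈ k[G]` set
`S_{ij}(x) = Σ_{ε₁(g)=i, ε₂(g)=j} x_g`. Then exactly one of the four elements
`S_{00}(x), S_{10}(x), S_{01}(x), S_{11}(x)` equals `1` and the other three equal `0`. -/
theorem stmt_5 (k G : Type*) [Field k] [CharP k 2] [Group G] [Fintype G]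
    (ε₁ ε₂ : G → ZMod 2)
    (hhom₁ : ∀ a b : G, ε₁ (a * b) = ε₁ a + ε₁ b)
    (hhom₂ : ∀ a b : G, ε₂ (a * b) = ε₂ a + ε₂ b)
    (hess₁ : ∀ g : G, g ^ 2 = 1 → ε₁ g = 0)
    (hess₂ : ∀ g : G, g ^ 2 = 1 → ε₂ g = 0)
    (x : MonoidAlgebra k G) (hx : x * gStar x = 1) :
    ∃ p : ZMod 2 × ZMod 2,
      (∑ g ∈ Finset.univ.filter fun g => (ε₁ g, ε₂ g) = p, x.coeff g) = 1 ∧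
        ∀ q : ZMod 2 × ZMod 2, q ≠ p →
          (∑ g ∈ Finset.univ.filter fun g => (ε₁ g, ε₂ g) = q, x.coeff g) = 0 := by
  classical
  set E : G → ZMod 2 × ZMod 2 := fun g => (ε₁ g, ε₂ g) with hE
  have hEhom : ∀ a b : G, E (a * b) = E a + E b := by
    intro a b
    simp only [hE, hhom₁, hhom₂, Prod.mk_add_mk]
  have hEss : ∀ g : G, g * g = 1 → E g = 0 := by
    intro g hg
    have hg2 : g ^ 2 = 1 := by rwa [pow_two]
    simp only [hE, hess₁ g hg2, hess₂ g hg2, Prod.mk_eq_zero, and_self]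
  -- the key convolution identity
  have key : ∀ h : G, (∑ a : G, x.coeff a * x.coeff (h * a)) = if h = 1 then 1 else 0 := by
    intro h
    have h1 : (x * gStar x).coeff h⁻¹ = (1 : MonoidAlgebra k G).coeff h⁻¹ := by rw [hx]
    rw [MonoidAlgebra.coeff_mul_apply_left, Finsupp.sum_fintype] at h1
    · have hterm : ∀ a : G, x.coeff a * (gStar x).coeff (a⁻¹ * h⁻¹) = x.coeff a * x.coeff (h * a) := by
        intro a
        simp only [gStar, MonoidAlgebra.coeff_ofCoeff, Finsupp.equivMapDomain_apply, Equiv.inv_symm, Equiv.inv_apply,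
          mul_inv_rev, inv_inv]
      simp only [hterm] at h1
      rw [h1, MonoidAlgebra.one_def, MonoidAlgebra.coeff_single, Finsupp.single_apply]
      by_cases hh : h = 1
      · subst hh; simp
      · rw [if_neg hh, if_neg (show ¬(1 : G) = h⁻¹ from fun hc => hh (inv_eq_one.mp hc.symm))]
    · intro a; rw [zero_mul]
  have key0 : ∀ h : G, h ≠ 1 → (∑ a : G, x.coeff a * x.coeff (h * a)) = 0 := by
    intro h hh; rw [key h, if_neg hh]
  -- total sum is 1
  have c2 : (2 : k) = 0 := by
    have := CharP.cast_eq_zero k 2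
    simpa using this
  have htot : (∑ g : G, x.coeff g) = 1 := by
    have hsq : (∑ g : G, x.coeff g) ^ 2 = 1 := by
      rw [sum_pow_char]
      calc (∑ g : G, x.coeff g ^ 2) = ∑ g : G, x.coeff g * x.coeff ((1 : G) * g) := by
            refine Finset.sum_congr rfl fun g _ => by rw [one_mul, pow_two]
        _ = 1 := by rw [key 1, if_pos rfl]
    have hz : ((∑ g : G, x.coeff g) - 1) ^ 2 = 0 := by
      linear_combination hsq + (1 - (∑ g : G, x.coeff g)) * c2
    have h0 := pow_eq_zero_iff (n := 2) (by norm_num) |>.mp hz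
    exact sub_eq_zero.mp h0
  -- sum of the four class sums is 1
  have hsum : (∑ g ∈ Finset.univ.filter fun g => E g = ((0 : ZMod 2), (0 : ZMod 2)), x.coeff g) +
      (∑ g ∈ Finset.univ.filter fun g => E g = ((1 : ZMod 2), (0 : ZMod 2)), x.coeff g) +
      (∑ g ∈ Finset.univ.filter fun g => E g = ((0 : ZMod 2), (1 : ZMod 2)), x.coeff g) +
      (∑ g ∈ Finset.univ.filter fun g => E g = ((1 : ZMod 2), (1 : ZMod 2)), x.coeff g) = 1 := by
    have hfib : ∑ v : ZMod 2 × ZMod 2, (∑ g ∈ Finset.univ.filter fun g => E g = v, x.coeff g)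
        = ∑ g : G, x.coeff g := Finset.sum_fiberwise Finset.univ E (fun g => x.coeff g)
    rw [htot] at hfib
    have huniv : (Finset.univ : Finset (ZMod 2 × ZMod 2)) =
        {((0 : ZMod 2), (0 : ZMod 2)), ((1 : ZMod 2), (0 : ZMod 2)),
          ((0 : ZMod 2), (1 : ZMod 2)), ((1 : ZMod 2), (1 : ZMod 2))} := by decide
    rw [huniv, Finset.sum_insert (by decide), Finset.sum_insert (by decide),
      Finset.sum_insert (by decide), Finset.sum_singleton] at hfib
    linear_combination hfib
  have R1 := aux_cross E (fun g => x.coeff g) hEhom hEss key0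
    ((0 : ZMod 2), (0 : ZMod 2)) ((1 : ZMod 2), (1 : ZMod 2))
    ((1 : ZMod 2), (0 : ZMod 2)) ((0 : ZMod 2), (1 : ZMod 2)) ((1 : ZMod 2), (1 : ZMod 2))
    (by decide) (by decide) (by decide) (by decide) (by decide) (by decide) (by decide)
  have R2 := aux_cross E (fun g => x.coeff g) hEhom hEss key0
    ((0 : ZMod 2), (0 : ZMod 2)) ((1 : ZMod 2), (0 : ZMod 2))
    ((0 : ZMod 2), (1 : ZMod 2)) ((1 : ZMod 2), (1 : ZMod 2)) ((1 : ZMod 2), (0 : ZMod 2))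
    (by decide) (by decide) (by decide) (by decide) (by decide) (by decide) (by decide)
  have R3 := aux_cross E (fun g => x.coeff g) hEhom hEss key0
    ((0 : ZMod 2), (0 : ZMod 2)) ((0 : ZMod 2), (1 : ZMod 2))
    ((1 : ZMod 2), (0 : ZMod 2)) ((1 : ZMod 2), (1 : ZMod 2)) ((0 : ZMod 2), (1 : ZMod 2))
    (by decide) (by decide) (by decide) (by decide) (by decide) (by decide) (by decide)
  have hfin := aux_final
    (∑ g ∈ Finset.univ.filter fun g => E g = ((0 : ZMod 2), (0 : ZMod 2)), x.coeff g)
    (∑ g ∈ Finset.univ.filter fun g => E g = ((1 : ZMod 2), (0 : ZMod 2)), x.coeff g)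
    (∑ g ∈ Finset.univ.filter fun g => E g = ((0 : ZMod 2), (1 : ZMod 2)), x.coeff g)
    (∑ g ∈ Finset.univ.filter fun g => E g = ((1 : ZMod 2), (1 : ZMod 2)), x.coeff g)
    hsum (by linear_combination R1) (by linear_combination R2) (by linear_combination R3)
  have hcover : ∀ q : ZMod 2 × ZMod 2, q = ((0 : ZMod 2), (0 : ZMod 2)) ∨
      q = ((1 : ZMod 2), (0 : ZMod 2)) ∨ q = ((0 : ZMod 2), (1 : ZMod 2)) ∨
      q = ((1 : ZMod 2), (1 : ZMod 2)) := by decide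
  rcases hfin with ⟨h00, h10, h01, h11⟩ | ⟨h10, h00, h01, h11⟩ | ⟨h01, h00, h10, h11⟩ |
    ⟨h11, h00, h10, h01⟩
  · refine ⟨((0 : ZMod 2), (0 : ZMod 2)), h00, fun q hq => ?_⟩
    rcases hcover q with rfl | rfl | rfl | rfl
    · exact absurd rfl hq
    · exact h10
    · exact h01
    · exact h11
  · refine ⟨((1 : ZMod 2), (0 : ZMod 2)), h10, fun q hq => ?_⟩
    rcases hcover q with rfl | rfl | rfl | rfl
    · exact h00
    · exact absurd rfl hq
    · exact h01
    · exact h11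
  · refine ⟨((0 : ZMod 2), (1 : ZMod 2)), h01, fun q hq => ?_⟩
    rcases hcover q with rfl | rfl | rfl | rfl
    · exact h00
    · exact h10
    · exact absurd rfl hq
    · exact h11
  · refine ⟨((1 : ZMod 2), (1 : ZMod 2)), h11, fun q hq => ?_⟩
    rcases hcover q with rfl | rfl | rfl | rfl
    · exact h00
    · exact h10
    · exact h01
    · exact absurd rfl hq
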